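/- Let (a_n)_{n=0}^∞ be a Leja sequence on the unit circle S¹. Then limsup_{N→∞} (E_0(α_N) + N log N)/N = log(4/3). -/

import Mathlib

open Filter Topology Finset

/-- binary digit sum -/
def s2 (n : ℕ) : ℕ := (Nat.digits 2 n).sum

lemma s2_zero : s2 0 = 0 := by unfold s2; simp

lemma s2_def (n : ℕ) (hn : 0 < n) : s2 n = n % 2 + s2 (n / 2) := by
  unfold s2
  rw [Nat.digits_def' (by norm_num) hn]
  simp

lemma s2_two_mul (m : ℕ) : s2 (2 * m) = s2 m := by
  rcases Nat.eq_zero_or_pos m with rfl | hm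
  · rfl
  · rw [s2_def (2*m) (by omega)]
    simp [Nat.mul_div_cancel_left, Nat.mul_mod_right]

lemma s2_two_mul_add_one (m : ℕ) : s2 (2 * m + 1) = s2 m + 1 := by
  rw [s2_def (2*m+1) (by omega)]
  have h1 : (2*m+1) % 2 = 1 := by omega
  have h2 : (2*m+1) / 2 = m := by omega
  rw [h1, h2]; omega

lemma s2_pow_add : ∀ k r : ℕ, r < 2^k → s2 (2^k + r) = 1 + s2 r := by
  intro k
  induction k with
  | zero =>
    intro r hr
    interval_cases r
    · simp [s2_def]
  | succ k ih =>
    intro r hr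
    rcases Nat.even_or_odd r with ⟨q, hq⟩ | ⟨q, hq⟩
    · have hq' : q < 2^k := by rw [pow_succ] at hr; omega
      have : 2^(k+1) + r = 2 * (2^k + q) := by rw [pow_succ]; omega
      rw [this, s2_two_mul, ih q hq', hq, show q + q = 2*q from by omega, s2_two_mul]
    · have hq' : q < 2^k := by rw [pow_succ] at hr; omega
      have : 2^(k+1) + r = 2 * (2^k + q) + 1 := by rw [pow_succ]; omega
      rw [this, s2_two_mul_add_one, ih q hq', hq, s2_two_mul_add_one]
      omega

/-- partial sums of binary digit sums -/
def Tsum (N : ℕ) : ℕ := ∑ n ∈ range N, s2 n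

lemma Tsum_succ (N : ℕ) : Tsum (N+1) = Tsum N + s2 N := Finset.sum_range_succ _ _

lemma Tsum_pow_add : ∀ k R : ℕ, R ≤ 2^k → Tsum (2^k + R) = Tsum (2^k) + R + Tsum R := by
  intro k R
  induction R with
  | zero => simp [Tsum]
  | succ R ih =>
    intro hR
    have hR' : R < 2^k := by omega
    rw [show 2^k + (R+1) = (2^k + R) + 1 from rfl, Tsum_succ, ih (by omega),
      s2_pow_add k R hR', Tsum_succ]
    ring

lemma Tsum_two_pow : ∀ k : ℕ, 2 * Tsum (2^k) = k * 2^k := by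
  intro k
  induction k with
  | zero => simp [Tsum, s2_zero]
  | succ k ih =>
    have : (2:ℕ)^(k+1) = 2^k + 2^k := by rw [pow_succ]; ring
    rw [this, Tsum_pow_add k (2^k) le_rfl]
    nlinarith [ih]


lemma abs_sub_le_two (u v : ℂ) (hu : ‖u‖ = 1) (hv : ‖v‖ = 1) :
    ‖u - v‖ ≤ 2 := by
  calc ‖u - v‖ ≤ ‖u‖ + ‖v‖ := by
        simpa [sub_eq_add_neg] using norm_add_le u (-v)
    _ = 2 := by rw [hu, hv]; norm_num

lemma eq_neg_of_abs_sub_eq_two (u v : ℂ) (hu : ‖u‖ = 1) (hv : ‖v‖ = 1)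
    (h : ‖u - v‖ = 2) : u = -v := by
  have hu2 : u.re^2 + u.im^2 = 1 := by
    have h1 := Complex.sq_norm u
    rw [hu] at h1
    simp [Complex.normSq_apply] at h1
    nlinarith [h1]
  have hv2 : v.re^2 + v.im^2 = 1 := by
    have h1 := Complex.sq_norm v
    rw [hv] at h1
    simp [Complex.normSq_apply] at h1
    nlinarith [h1]
  have h4 : (u.re - v.re)^2 + (u.im - v.im)^2 = 4 := by
    have h1 := Complex.sq_norm (u - v)
    rw [h] at h1
    simp [Complex.normSq_apply, Complex.sub_re, Complex.sub_im] at h1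
    nlinarith [h1]
  have hz : (u.re + v.re)^2 + (u.im + v.im)^2 = 0 := by nlinarith
  have h5 : u.re = -v.re := by nlinarith [sq_nonneg (u.re + v.re), sq_nonneg (u.im + v.im)]
  have h6 : u.im = -v.im := by nlinarith [sq_nonneg (u.re + v.re), sq_nonneg (u.im + v.im)]
  apply Complex.ext <;> simp [h5, h6]

lemma sq_surj (u : ℂ) (h : ‖u‖ = 1) : ∃ z : ℂ, ‖z‖ = 1 ∧ z^2 = u := by
  obtain ⟨z, hz⟩ := Complex.isAlgClosed.exists_pow_nat_eq u (n := 2) (by norm_num)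
  refine ⟨z, ?_, hz⟩
  have : (‖z‖)^2 = 1 := by rw [← norm_pow, hz, h]
  nlinarith [norm_nonneg z]

lemma prod_pair (b : ℕ → ℂ) (t : ℕ) (hp : ∀ i, i < t → b (2*i+1) = -(b (2*i))) (z : ℂ) :
    ∏ i ∈ Finset.range (2*t), (z - b i) = ∏ i ∈ Finset.range t, (z^2 - (b (2*i))^2) := by
  induction t with
  | zero => simp
  | succ t ih =>
    have h2 : 2*(t+1) = (2*t+1)+1 := by ring
    rw [h2, Finset.prod_range_succ, Finset.prod_range_succ, Finset.prod_range_succ,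
      ih (fun i hi => hp i (by omega)), hp t (by omega)]
    ring

/-- `w` maximizes `g` over the unit circle. -/
def CMax (g : ℂ → ℝ) (w : ℂ) : Prop :=
  ‖w‖ = 1 ∧ ∀ z : ℂ, ‖z‖ = 1 → g z ≤ g w

/-- objective at step `j` of the tail after a full block: `|z^m - c| ∏_{i<j} |z - b i|`. -/
noncomputable def tf (m : ℕ) (c : ℂ) (b : ℕ → ℂ) (j : ℕ) (z : ℂ) : ℝ :=
  ‖z ^ m - c‖ * ∏ i ∈ Finset.range j, ‖z - b i‖


theorem tailThm (k : ℕ) : ∀ (c : ℂ), ‖c‖ = 1 → ∀ (b : ℕ → ℂ) (r : ℕ), r ≤ 2^k →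
    (∀ j, j < r → CMax (tf (2^k) c b j) (b j)) →
    ((∀ j, j < r → (b j)^(2^k) = -c ∧ tf (2^k) c b j (b j) = 2^(1 + s2 j)) ∧
    (r = 2^k → ∀ z : ℂ, ∏ j ∈ Finset.range (2^k), (z - b j) = z^(2^k) + c)) := by
  induction k with
  | zero =>
    intro c hc b r hr hmax
    have key : 0 < r → b 0 = -c ∧ tf (2^0) c b 0 (b 0) = 2 := by
      intro hr0
      obtain ⟨hcirc, hm⟩ := hmax 0 hr0
      have h1 : tf (2^0) c b 0 (-c) ≤ tf (2^0) c b 0 (b 0) := hm (-c) (by simpa using hc)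
      have e1 : tf (2^0) c b 0 (-c) = 2 := by
        simp only [tf, pow_zero, pow_one, Finset.range_zero, Finset.prod_empty, mul_one]
        rw [show -c - c = (-2 : ℂ) * c by ring, norm_mul, hc]
        simp
      have e2 : tf (2^0) c b 0 (b 0) = ‖b 0 - c‖ := by
        simp [tf]
      have hle : ‖b 0 - c‖ ≤ 2 := abs_sub_le_two _ _ hcirc hc
      have heq : ‖b 0 - c‖ = 2 := by rw [e1] at h1; rw [e2] at h1; linarith
      exact ⟨eq_neg_of_abs_sub_eq_two _ _ hcirc hc heq, by rw [e2, heq]⟩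
    constructor
    · intro j hj
      have hj0 : j = 0 := by omega
      subst hj0
      obtain ⟨h1, h2⟩ := key hj
      refine ⟨by simpa using h1, by rw [h2]; simp [s2]⟩
    · intro hreq z
      obtain ⟨h1, _⟩ := key (by omega)
      simp only [pow_zero, Finset.prod_range_one, pow_one]
      rw [h1]; ring
  | succ k ih =>
    intro c hc b r hr hmax
    set β : ℕ → ℂ := fun t => (b (2*t))^2 with hβ
    have hm2 : (2:ℕ)^(k+1) = 2*2^k := by rw [pow_succ]; ring
    have tfid : ∀ t : ℕ, (∀ i, i < t → b (2*i+1) = -(b (2*i))) → ∀ z : ℂ,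
        tf (2^(k+1)) c b (2*t) z = tf (2^k) c β t (z^2) := by
      intro t hp z
      unfold tf
      have e1 : z ^ (2^(k+1)) = (z^2)^(2^k) := by rw [hm2, pow_mul]
      have e2 : (∏ i ∈ Finset.range (2*t), ‖z - b i‖)
          = ∏ i ∈ Finset.range t, ‖z^2 - β i‖ := by
        rw [← norm_prod, prod_pair b t hp z, norm_prod]
      rw [e1, e2]
    have tfodd : ∀ t : ℕ, (∀ i, i < t → b (2*i+1) = -(b (2*i))) → ∀ z : ℂ,
        tf (2^(k+1)) c b (2*t+1) z = tf (2^k) c β t (z^2) * ‖z - b (2*t)‖ := by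
      intro t hp z
      have e0 : tf (2^(k+1)) c b (2*t+1) z
          = tf (2^(k+1)) c b (2*t) z * ‖z - b (2*t)‖ := by
        unfold tf
        rw [Finset.prod_range_succ, mul_assoc]
      rw [e0, tfid t hp z]
    -- main bookkeeping induction
    have Q : ∀ j, j ≤ r → (∀ t, 2*t+1 < j → b (2*t+1) = -(b (2*t))) ∧
        (∀ t, 2*t < j → CMax (tf (2^k) c β t) (β t)) := by
      intro j
      induction j with
      | zero => intro _; exact ⟨fun t ht => absurd ht (by omega), fun t ht => absurd ht (by omega)⟩
      | succ j ihj =>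
        intro hjr
        obtain ⟨pj, bj⟩ := ihj (by omega)
        rcases Nat.even_or_odd j with hje | hjo
        · -- j = 2t : new β-max at t
          obtain ⟨t, ht⟩ : ∃ t, j = 2*t := by
            obtain ⟨t, ht⟩ := hje; exact ⟨t, by omega⟩
          have hnew : CMax (tf (2^k) c β t) (β t) := by
            obtain ⟨hbc, hbm⟩ := hmax j (by omega)
            constructor
            · show ‖(b (2*t))^2‖ = 1
              rw [norm_pow, ← ht, hbc, one_pow]
            · intro u hu
              obtain ⟨z, hz1, hz2⟩ := sq_surj u hu
              have hp' : ∀ i, i < t → b (2*i+1) = -(b (2*i)) := fun i hi => pj i (by omega)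
              have e1 := tfid t hp' z
              have e2 := tfid t hp' (b (2*t))
              rw [← hz2, ← e1]
              have hb2 : tf (2^(k+1)) c b (2*t) z ≤ tf (2^(k+1)) c b (2*t) (b (2*t)) := by
                rw [← ht] at *
                exact hbm z hz1
              calc tf (2^(k+1)) c b (2*t) z ≤ tf (2^(k+1)) c b (2*t) (b (2*t)) := hb2
                _ = tf (2^k) c β t (β t) := e2
          refine ⟨fun t' ht' => pj t' (by omega), ?_⟩
          intro t' ht'
          by_cases h' : 2*t' < j
          · exact bj t' h'
          · have : t' = t := by omega
            subst this; exact hnew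
        · -- j = 2t+1 : new pairing at t
          obtain ⟨t, ht⟩ := hjo
          have hβmax : ∀ t', t' < t+1 → CMax (tf (2^k) c β t') (β t') :=
            fun t' ht' => bj t' (by omega)
          have htk : t + 1 ≤ 2^k := by
            have hr' := hr; rw [hm2] at hr'; omega
          have hIH := ih c hc β (t+1) htk hβmax
          have hval : tf (2^k) c β t (β t) = 2^(1 + s2 t) := (hIH.1 t (by omega)).2
          have hpos : (0:ℝ) < tf (2^k) c β t (β t) := by rw [hval]; positivity
          obtain ⟨hbc, hbm⟩ := hmax j (by omega)
          have hp' : ∀ i, i < t → b (2*i+1) = -(b (2*i)) := fun i hi => pj i (by omega)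
          have hcirc2t : ‖b (2*t)‖ = 1 := (hmax (2*t) (by omega)).1
          have hneg1 : ‖-(b (2*t))‖ = 1 := by simpa using hcirc2t
          have hlow : tf (2^k) c β t (β t) * 2 ≤ tf (2^(k+1)) c b (2*t+1) (b j) := by
            have h1 := hbm (-(b (2*t))) hneg1
            rw [ht] at h1
            rw [tfodd t hp' (-(b (2*t)))] at h1
            have e3 : (-(b (2*t)))^2 = β t := by rw [hβ]; ring
            have e4 : ‖-(b (2*t)) - b (2*t)‖ = 2 := by
              rw [show -(b (2*t)) - b (2*t) = (-2 : ℂ) * b (2*t) by ring, norm_mul, hcirc2t]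
              simp
            rw [e3, e4] at h1
            have : b (2*t+1) = b j := by rw [ht]
            rw [← this]
            exact h1
          have hup : tf (2^(k+1)) c b (2*t+1) (b j)
              ≤ tf (2^k) c β t (β t) * ‖b j - b (2*t)‖ := by
            rw [tfodd t hp' (b j)]
            apply mul_le_mul_of_nonneg_right
            · exact (hβmax t (by omega)).2 ((b j)^2) (by rw [norm_pow, hbc, one_pow])
            · exact norm_nonneg _
          have habs2 : ‖b j - b (2*t)‖ = 2 := by
            have hle : ‖b j - b (2*t)‖ ≤ 2 := abs_sub_le_two _ _ hbc hcirc2t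
            nlinarith
          have hpair : b j = -(b (2*t)) := eq_neg_of_abs_sub_eq_two _ _ hbc hcirc2t habs2
          refine ⟨?_, fun t' ht' => bj t' (by omega)⟩
          intro t' ht'
          by_cases h' : 2*t'+1 < j
          · exact pj t' h'
          · have : t' = t := by omega
            subst this
            rw [← ht]; exact hpair
    obtain ⟨pall, ball⟩ := Q r le_rfl
    constructor
    · intro j hj
      rcases Nat.even_or_odd j with hje | hjo
      · obtain ⟨t, ht⟩ : ∃ t, j = 2*t := by
          obtain ⟨t, ht⟩ := hje; exact ⟨t, by omega⟩
        subst ht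
        have hIH := ih c hc β (t+1) (by rw [hm2] at hr; omega)
          (fun t' ht' => ball t' (by omega))
        have hroot : (β t)^(2^k) = -c := (hIH.1 t (by omega)).1
        have hval : tf (2^k) c β t (β t) = 2^(1 + s2 t) := (hIH.1 t (by omega)).2
        have hp' : ∀ i, i < t → b (2*i+1) = -(b (2*i)) := fun i hi => pall i (by omega)
        constructor
        · rw [hm2, mul_comm 2 (2^k)]
          rw [show (2:ℕ)^k * 2 = 2 * 2^k from by ring, pow_mul]
          exact hroot
        · rw [tfid t hp' (b (2*t))]
          show tf (2^k) c β t (β t) = _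
          rw [hval, s2_two_mul]
      · obtain ⟨t, ht⟩ := hjo
        subst ht
        have hpair : b (2*t+1) = -(b (2*t)) := pall t (by omega)
        have hIH := ih c hc β (t+1) (by rw [hm2] at hr; omega)
          (fun t' ht' => ball t' (by omega))
        have hroot : (β t)^(2^k) = -c := (hIH.1 t (by omega)).1
        have hval : tf (2^k) c β t (β t) = 2^(1 + s2 t) := (hIH.1 t (by omega)).2
        have hp' : ∀ i, i < t → b (2*i+1) = -(b (2*i)) := fun i hi => pall i (by omega)
        have hcirc2t : ‖b (2*t)‖ = 1 := (hmax (2*t) (by omega)).1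
        constructor
        · rw [hpair]
          have heven : Even (2^(k+1)) := by
            refine ⟨2^k, ?_⟩; rw [hm2]; ring
          rw [heven.neg_pow]
          rw [hm2, mul_comm 2 (2^k), show (2:ℕ)^k * 2 = 2 * 2^k from by ring, pow_mul]
          exact hroot
        · rw [tfodd t hp' (b (2*t+1))]
          have e3 : (b (2*t+1))^2 = β t := by rw [hpair, hβ]; ring
          have e4 : ‖b (2*t+1) - b (2*t)‖ = 2 := by
            rw [hpair, show -(b (2*t)) - b (2*t) = (-2 : ℂ) * b (2*t) by ring, norm_mul, hcirc2t]
            simp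
          rw [e3, e4, hval, s2_two_mul_add_one]
          rw [show 1 + (s2 t + 1) = (1 + s2 t) + 1 from by ring, pow_succ]
    · intro hreq z
      have hp' : ∀ i, i < 2^k → b (2*i+1) = -(b (2*i)) := by
        intro i hi
        apply pall
        rw [hreq, hm2]; omega
      have hIH := ih c hc β (2^k) le_rfl
        (fun t' ht' => ball t' (by rw [hreq, hm2]; omega))
      have hfull := hIH.2 rfl (z^2)
      rw [show Finset.range (2^(k+1)) = Finset.range (2*2^k) from by rw [hm2]]
      rw [prod_pair b (2^k) hp' z]
      calc (∏ i ∈ Finset.range (2^k), (z^2 - (b (2*i))^2))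
          = (z^2)^(2^k) + c := hfull
        _ = z^(2^(k+1)) + c := by rw [hm2, pow_mul]
/-- Logarithmic energy of the first `N` points of the sequence `a`. -/
noncomputable def logEnergy (a : ℕ → ℂ) (N : ℕ) : ℝ :=
  ∑ i ∈ Finset.range N, ∑ j ∈ Finset.range N,
    if i ≠ j then Real.log (1 / ‖a i - a j‖) else 0

/-- `a` is a Leja sequence on the unit circle: all points lie on the circle and
`a (n+1)` maximizes `∏_{i=0}^{n} |z - a i|` over the circle. -/
def IsLejaSeq (a : ℕ → ℂ) : Prop :=
  (∀ n, ‖a n‖ = 1) ∧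
  ∀ n : ℕ, ∀ z : ℂ, ‖z‖ = 1 →
    ∏ i ∈ Finset.range (n + 1), ‖z - a i‖ ≤
      ∏ i ∈ Finset.range (n + 1), ‖a (n + 1) - a i‖

lemma leja_max (a : ℕ → ℂ) (ha : IsLejaSeq a) (n : ℕ) (hn : 1 ≤ n) :
    ∀ z : ℂ, ‖z‖ = 1 →
      ∏ i ∈ Finset.range n, ‖z - a i‖ ≤
        ∏ i ∈ Finset.range n, ‖a n - a i‖ := by
  obtain ⟨n', rfl⟩ : ∃ m, n = m + 1 := ⟨n - 1, by omega⟩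
  exact ha.2 n'

lemma tail_decomp (a : ℕ → ℂ) (k : ℕ) (c : ℂ)
    (hprod : ∀ z : ℂ, ∏ i ∈ Finset.range (2^k), (z - a i) = z^(2^k) - c) :
    ∀ j : ℕ, ∀ w : ℂ, ∏ i ∈ Finset.range (2^k + j), ‖w - a i‖
      = tf (2^k) c (fun i => a (2^k + i)) j w := by
  intro j w
  rw [Finset.prod_range_add]
  unfold tf
  congr 1
  rw [← norm_prod, hprod w]

lemma tail_hmax (a : ℕ → ℂ) (ha : IsLejaSeq a) (k : ℕ) (c : ℂ)
    (hprod : ∀ z : ℂ, ∏ i ∈ Finset.range (2^k), (z - a i) = z^(2^k) - c) :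
    ∀ j, j < 2^k → CMax (tf (2^k) c (fun i => a (2^k + i)) j) (a (2^k + j)) := by
  intro j hj
  refine ⟨ha.1 _, ?_⟩
  intro z hz
  have h1 := leja_max a ha (2^k + j) (by have := Nat.one_le_two_pow (n := k); omega) z hz
  rw [tail_decomp a k c hprod j z, tail_decomp a k c hprod j (a (2^k + j))] at h1
  exact h1

theorem blockThm (a : ℕ → ℂ) (ha : IsLejaSeq a) :
    ∀ k : ℕ, ∃ c : ℂ, ‖c‖ = 1 ∧
      ∀ z : ℂ, ∏ i ∈ Finset.range (2^k), (z - a i) = z^(2^k) - c := by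
  intro k
  induction k with
  | zero => exact ⟨a 0, ha.1 0, by intro z; simp⟩
  | succ k ih =>
    obtain ⟨c, hc, hprod⟩ := ih
    have hmax := tail_hmax a ha k c hprod
    have hfull := (tailThm k c hc (fun i => a (2^k + i)) (2^k) le_rfl hmax).2 rfl
    refine ⟨c^2, by rw [norm_pow, hc, one_pow], ?_⟩
    intro z
    rw [show (2:ℕ)^(k+1) = 2^k + 2^k from by rw [pow_succ]; ring, Finset.prod_range_add,
      hprod z, hfull z, pow_add]
    ring

theorem leja_prod (a : ℕ → ℂ) (ha : IsLejaSeq a) (n : ℕ) (hn : 1 ≤ n) :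
    ∏ i ∈ Finset.range n, ‖a n - a i‖ = 2^(s2 n) := by
  set k := Nat.log 2 n with hk
  have hk1 : 2^k ≤ n := Nat.pow_log_le_self 2 (by omega)
  have hk2 : n < 2^(k+1) := Nat.lt_pow_succ_log_self (by norm_num) n
  set r := n - 2^k with hrdef
  have hrn : n = 2^k + r := by omega
  have hr : r < 2^k := by rw [pow_succ] at hk2; omega
  obtain ⟨c, hc, hprod⟩ := blockThm a ha k
  have hmax := tail_hmax a ha k c hprod
  have hval := ((tailThm k c hc (fun i => a (2^k + i)) (r+1) (by omega)
      (fun j hj => hmax j (by omega))).1 r (by omega)).2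
  have e := tail_decomp a k c hprod r (a (2^k + r))
  rw [hrn]
  rw [e, hval, s2_pow_add k r hr]

lemma leja_ne (a : ℕ → ℂ) (ha : IsLejaSeq a) (i j : ℕ) (hij : i < j) : a i ≠ a j := by
  have hp := leja_prod a ha j (by omega)
  have hne : (∏ i ∈ Finset.range j, ‖a j - a i‖) ≠ 0 := by
    rw [hp]; positivity
  rw [Finset.prod_ne_zero_iff] at hne
  have h2 := hne i (Finset.mem_range.mpr hij)
  intro heq
  apply h2
  rw [heq, sub_self, norm_zero]

lemma energy_eq (a : ℕ → ℂ) (ha : IsLejaSeq a) (N : ℕ) :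
    logEnergy a N = -2 * Real.log 2 * (Tsum N : ℝ) := by
  induction N with
  | zero => simp [logEnergy, Tsum]
  | succ N ih =>
    have hrow : ∑ i ∈ Finset.range N,
        (if N ≠ i then Real.log (1 / ‖a N - a i‖) else 0)
        = -(Real.log 2 * (s2 N : ℝ)) := by
      rcases Nat.eq_zero_or_pos N with rfl | hN
      · simp [s2_zero]
      · have hprod := leja_prod a ha N (by omega)
        have hlog : ∑ i ∈ Finset.range N, Real.log (‖a N - a i‖)
            = Real.log 2 * (s2 N : ℝ) := by
          rw [← Real.log_prod (fun i hi => ?_)]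
          · rw [hprod, Real.log_pow]; ring
          · exact norm_ne_zero_iff.mpr
              (sub_ne_zero.mpr (Ne.symm (leja_ne a ha i N (Finset.mem_range.mp hi))))
        calc ∑ i ∈ Finset.range N,
              (if N ≠ i then Real.log (1 / ‖a N - a i‖) else 0)
            = ∑ i ∈ Finset.range N, -(Real.log (‖a N - a i‖)) := by
              apply Finset.sum_congr rfl
              intro i hi
              rw [if_pos (by have := Finset.mem_range.mp hi; omega), one_div, Real.log_inv]
          _ = -(∑ i ∈ Finset.range N, Real.log (‖a N - a i‖)) := by
              rw [Finset.sum_neg_distrib]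
          _ = _ := by rw [hlog]
    have hsym : ∀ i ∈ Finset.range N,
        (if i ≠ N then Real.log (1 / ‖a i - a N‖) else 0)
        = (if N ≠ i then Real.log (1 / ‖a N - a i‖) else 0) := by
      intro i hi
      by_cases h : i = N
      · subst h; simp
      · rw [if_pos h, if_pos (Ne.symm h), norm_sub_rev]
    show (∑ i ∈ Finset.range (N+1), ∑ j ∈ Finset.range (N+1),
      if i ≠ j then Real.log (1 / ‖a i - a j‖) else 0) = _
    rw [Finset.sum_range_succ]
    have hinner : ∀ i ∈ Finset.range N,
        (∑ j ∈ Finset.range (N+1), if i ≠ j then Real.log (1/‖a i - a j‖) else 0)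
        = (∑ j ∈ Finset.range N, if i ≠ j then Real.log (1/‖a i - a j‖) else 0)
          + (if i ≠ N then Real.log (1/‖a i - a N‖) else 0) :=
      fun i _ => Finset.sum_range_succ _ _
    rw [Finset.sum_congr rfl hinner, Finset.sum_add_distrib]
    rw [Finset.sum_range_succ]
    rw [if_neg (by simp)]
    rw [Finset.sum_congr rfl hsym, hrow]
    have hle : (∑ i ∈ Finset.range N, ∑ j ∈ Finset.range N,
        if i ≠ j then Real.log (1 / ‖a i - a j‖) else 0) = logEnergy a N := rfl
    rw [hle, ih, Tsum_succ]
    push_cast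
    ring
/-! ### The analytic inequality -/

lemma keyx (x : ℝ) (hx : 0 < x) :
    (1+x) * Real.log (3*(1+x)/4) ≤ x * Real.log (3*x) := by
  have h2 : Real.log (3*(1+x)/4) ≤ 3*(1+x)/4 - 1 :=
    Real.log_le_sub_one_of_pos (by nlinarith)
  have e2 : Real.log ((1+x)/(4*x)) = Real.log (3*(1+x)/4) - Real.log (3*x) := by
    rw [show (1+x)/(4*x) = (3*(1+x)/4)/(3*x) by field_simp]
    exact Real.log_div (by positivity) (by positivity)
  have h1 : Real.log ((1+x)/(4*x)) ≤ (1+x)/(4*x) - 1 :=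
    Real.log_le_sub_one_of_pos (by positivity)
  have b1 : x * Real.log ((1+x)/(4*x)) ≤ (1+x)/4 - x := by
    calc x * Real.log ((1+x)/(4*x)) ≤ x * ((1+x)/(4*x) - 1) :=
          mul_le_mul_of_nonneg_left h1 hx.le
      _ = (1+x)/4 - x := by field_simp
  rw [e2] at b1
  nlinarith [b1, h2]

lemma key_homog (A R : ℝ) (hA : 0 < A) (hR : 0 < R) :
    (A+R) * Real.log (3*(A+R)/4) ≤ A * Real.log A + R * Real.log (3*R) := by
  have hx : 0 < R/A := by positivity
  have h := keyx (R/A) hx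
  have e1 : (1 + R/A) = (A+R)/A := by field_simp
  have e2 : 3*((A+R)/A)/4 = (3*(A+R)/4)/A := by ring
  have e3 : Real.log ((3*(A+R)/4)/A) = Real.log (3*(A+R)/4) - Real.log A :=
    Real.log_div (by positivity) (ne_of_gt hA)
  have e4 : 3*(R/A) = (3*R)/A := by ring
  have e5 : Real.log ((3*R)/A) = Real.log (3*R) - Real.log A :=
    Real.log_div (by positivity) (ne_of_gt hA)
  rw [e1, e2, e3, e4, e5] at h
  have h' := mul_le_mul_of_nonneg_left h hA.le
  have eA : A * ((A+R)/A * (Real.log (3*(A+R)/4) - Real.log A))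
      = (A+R) * (Real.log (3*(A+R)/4) - Real.log A) := by field_simp
  have eB : A * (R/A * (Real.log (3*R) - Real.log A))
      = R * (Real.log (3*R) - Real.log A) := by field_simp
  rw [eA, eB] at h'
  nlinarith [h']

lemma main_ineq : ∀ N : ℕ, 1 ≤ N →
    (N:ℝ) * Real.log (3*N/4) ≤ 2 * Real.log 2 * (Tsum N : ℝ) := by
  intro N
  induction N using Nat.strong_induction_on with
  | _ N ih =>
    intro hN
    rcases eq_or_lt_of_le hN with h1 | h2
    · rw [← h1]
      have : Tsum 1 = 0 := by simp [Tsum, s2_zero]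
      rw [this]
      norm_num
      exact Real.log_nonpos (by norm_num) (by norm_num)
    · set k := Nat.log 2 N with hk
      have hk1 : 2^k ≤ N := Nat.pow_log_le_self 2 (by omega)
      have hk2 : N < 2^(k+1) := Nat.lt_pow_succ_log_self (by norm_num) N
      set R := N - 2^k with hRdef
      have hNk : N = 2^k + R := by omega
      have hRk : R < 2^k := by rw [pow_succ] at hk2; omega
      have hT : Tsum N = Tsum (2^k) + R + Tsum R := by
        rw [hNk]; exact Tsum_pow_add k R (le_of_lt hRk)
      have hT2 : 2 * Tsum (2^k) = k * 2^k := Tsum_two_pow k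
      have hA : (0:ℝ) < 2^k := by positivity
      have hlogA : Real.log ((2:ℝ)^k) = k * Real.log 2 := by rw [Real.log_pow]
      have hTA : 2 * Real.log 2 * (Tsum (2^k) : ℝ) = (2:ℝ)^k * Real.log ((2:ℝ)^k) := by
        have h0 : ((2 * Tsum (2^k) : ℕ) : ℝ) = ((k * 2^k : ℕ) : ℝ) := by rw [hT2]
        push_cast at h0
        rw [hlogA]
        calc 2 * Real.log 2 * (Tsum (2^k) : ℝ) = Real.log 2 * (2 * (Tsum (2^k) : ℝ)) := by ring
          _ = Real.log 2 * ((k:ℝ) * 2^k) := by rw [h0]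
          _ = (2:ℝ)^k * ((k:ℝ) * Real.log 2) := by ring
      rcases Nat.eq_zero_or_pos R with hR0 | hRpos
      · -- N = 2^k
        have hNA : N = 2^k := by omega
        rw [hNA]
        have hTN : (Tsum N : ℝ) = Tsum (2^k) := by rw [hNA]
        push_cast
        rw [show 2 * Real.log 2 * (Tsum (2^k) : ℝ) = (2:ℝ)^k * Real.log ((2:ℝ)^k) from hTA]
        have hsplit : Real.log (3*(2:ℝ)^k/4) = Real.log ((2:ℝ)^k) + Real.log (3/4) := by
          rw [show 3*(2:ℝ)^k/4 = (2:ℝ)^k * (3/4) by ring]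
          exact Real.log_mul (by positivity) (by norm_num)
        rw [hsplit]
        have : Real.log (3/4:ℝ) ≤ 0 := Real.log_nonpos (by norm_num) (by norm_num)
        nlinarith [hA]
      · have hihR : (R:ℝ) * Real.log (3*R/4) ≤ 2*Real.log 2 * (Tsum R : ℝ) :=
          ih R (by omega) (by omega)
        have hRr : (0:ℝ) < (R:ℝ) := by exact_mod_cast hRpos
        have hhom := key_homog ((2:ℝ)^k) (R:ℝ) hA hRr
        have hNr : (N:ℝ) = (2:ℝ)^k + R := by rw [hNk]; push_cast; ring
        have hTN : (Tsum N : ℝ) = (Tsum (2^k) : ℝ) + R + Tsum R := by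
          rw [hT]; push_cast; ring
        have hlog3R : Real.log (3*(R:ℝ)) = Real.log (3*R/4) + 2 * Real.log 2 := by
          rw [show 3*(R:ℝ) = (3*R/4) * 4 by ring]
          rw [Real.log_mul (by positivity) (by norm_num)]
          rw [show (4:ℝ) = 2^2 by norm_num, Real.log_pow]
          push_cast; ring
        rw [hNr, hTN]
        rw [hlog3R] at hhom
        nlinarith [hhom, hihR, hTA]

/-! ### The extremal sequence -/

def Nk : ℕ → ℕ
  | 0 => 0
  | (k+1) => 4 * Nk k + 2

lemma Nk_closed : ∀ k : ℕ, 3 * Nk k + 2 = 2 * 4^k := by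
  intro k
  induction k with
  | zero => simp [Nk]
  | succ k ih =>
    have h4 : (4:ℕ)^(k+1) = 4^k * 4 := pow_succ 4 k
    show 3 * (4 * Nk k + 2) + 2 = 2 * 4^(k+1)
    omega

lemma Nk_ge : ∀ k : ℕ, k ≤ Nk k := by
  intro k
  induction k with
  | zero => simp
  | succ k ih => show k + 1 ≤ 4 * Nk k + 2; omega

lemma s2_Nk : ∀ k : ℕ, s2 (Nk k) = k := by
  intro k
  induction k with
  | zero => exact s2_zero
  | succ k ih =>
    show s2 (4 * Nk k + 2) = k + 1
    rw [show 4 * Nk k + 2 = 2*(2*Nk k + 1) from by ring, s2_two_mul, s2_two_mul_add_one, ih]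

lemma Tsum_two_mul : ∀ N : ℕ, Tsum (2*N) = 2 * Tsum N + N := by
  intro N
  induction N with
  | zero => simp [Tsum]
  | succ N ih =>
    have h1 : 2*(N+1) = (2*N+1)+1 := by ring
    rw [h1, Tsum_succ, show 2*N+1 = (2*N)+1 from rfl, Tsum_succ, ih,
      s2_two_mul, s2_two_mul_add_one, Tsum_succ]
    ring

lemma Tsum_Nk_rec (k : ℕ) : Tsum (Nk (k+1)) = 4 * Tsum (Nk k) + 4 * Nk k + 2*k + 1 := by
  show Tsum (4 * Nk k + 2) = _
  rw [show 4 * Nk k + 2 = 2*(2*Nk k + 1) from by ring, Tsum_two_mul,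
    show 2*Nk k + 1 = (2*Nk k)+1 from rfl, Tsum_succ, Tsum_two_mul, s2_two_mul, s2_Nk]
  ring

lemma Tsum_Nk (k : ℕ) : (3 * Tsum (Nk k) : ℤ) = (2*k - 1)*(4^k - 1) := by
  induction k with
  | zero => simp [Nk, Tsum]
  | succ k ih =>
    have hc : (3 * Nk k : ℤ) = 2 * 4^k - 2 := by
      have h := Nk_closed k
      have h2 : ((3 * Nk k + 2 : ℕ) : ℤ) = ((2 * 4^k : ℕ) : ℤ) := by rw [h]
      push_cast at h2
      linarith
    rw [Tsum_Nk_rec k]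
    push_cast
    push_cast at ih hc
    linear_combination 4*ih + 4*hc

/-! ### The value of f along Nk -/

noncomputable def fN (N : ℕ) : ℝ := ((N:ℝ) * Real.log N - 2 * Real.log 2 * (Tsum N : ℝ)) / N

lemma fN_Nk (k : ℕ) : fN (Nk (k+1)) = Real.log (4/3 * (1 - (1/4:ℝ)^(k+1))) := by
  have hpos : 0 < Nk (k+1) := by have := Nk_ge (k+1); omega
  have hNr : (0:ℝ) < (Nk (k+1) : ℝ) := by exact_mod_cast hpos
  have hcN : (3 * Nk (k+1) : ℝ) = 2 * 4^(k+1) - 2 := by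
    have h := Nk_closed (k+1)
    have h2 : ((3 * Nk (k+1) + 2 : ℕ) : ℝ) = ((2 * 4^(k+1) : ℕ) : ℝ) := by rw [h]
    push_cast at h2
    linarith
  have hcT : (3 * Tsum (Nk (k+1)) : ℝ) = (2*(k:ℝ)+1)*(4^(k+1) - 1) := by
    have h := Tsum_Nk (k+1)
    have h2 := congrArg (fun z : ℤ => (z : ℝ)) h
    push_cast at h2
    linear_combination h2
  have hTrel : 2 * (Tsum (Nk (k+1)) : ℝ) = (2*(k:ℝ)+1) * (Nk (k+1)) := by
    nlinarith [hcN, hcT]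
  have hfval : fN (Nk (k+1)) = Real.log (Nk (k+1)) - (2*(k:ℝ)+1) * Real.log 2 := by
    unfold fN
    rw [show 2 * Real.log 2 * (Tsum (Nk (k+1)) : ℝ) = Real.log 2 * (2 * (Tsum (Nk (k+1)) : ℝ)) by ring,
      hTrel]
    field_simp
  have hq : (0:ℝ) < 1 - (1/4:ℝ)^(k+1) := by
    have : (1/4:ℝ)^(k+1) < 1 := pow_lt_one₀ (by norm_num) (by norm_num) (by omega)
    linarith
  have hNe : (Nk (k+1) : ℝ) = (4/3 * (1 - (1/4:ℝ)^(k+1))) * 2^(2*k+1) := by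
    have h4 : (4:ℝ)^(k+1) = ((2:ℝ)^(2*k+1)) * 2 := by
      rw [show (4:ℝ) = 2^2 by norm_num, ← pow_mul,
        show 2*(k+1) = (2*k+1)+1 from by ring, pow_succ]
    have h14 : (1/4:ℝ)^(k+1) * 4^(k+1) = 1 := by
      rw [← mul_pow]; norm_num
    nlinarith [hcN, h4, h14]
  rw [hfval, hNe, Real.log_mul (by positivity) (by positivity), Real.log_pow]
  push_cast
  ring

lemma fN_le (N : ℕ) (hN : 1 ≤ N) : fN N ≤ Real.log (4/3) := by
  have hNr : (0:ℝ) < (N:ℝ) := by exact_mod_cast hN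
  have hmain := main_ineq N hN
  unfold fN
  rw [div_le_iff₀ hNr]
  have hsplit : Real.log (3*(N:ℝ)/4) = Real.log N + Real.log (3/4) := by
    rw [show 3*(N:ℝ)/4 = (N:ℝ) * (3/4) by ring]
    exact Real.log_mul (by positivity) (by norm_num)
  have hinv : Real.log (4/3:ℝ) = - Real.log (3/4:ℝ) := by
    rw [show (4/3:ℝ) = (3/4:ℝ)⁻¹ by norm_num, Real.log_inv]
  rw [hsplit] at hmain
  nlinarith [hmain]

theorem leja_logEnergy_limsup (a : ℕ → ℂ) (ha : IsLejaSeq a) :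
    Filter.limsup (fun N : ℕ => (logEnergy a N + (N : ℝ) * Real.log N) / (N : ℝ)) atTop
      = Real.log (4 / 3) := by
  have hfun : (fun N : ℕ => (logEnergy a N + (N : ℝ) * Real.log N) / (N : ℝ)) = fN := by
    funext N
    rw [energy_eq a ha N]
    unfold fN
    ring
  rw [hfun]
  have hub : ∀ N : ℕ, fN N ≤ Real.log (4/3) := by
    intro N
    rcases Nat.eq_zero_or_pos N with rfl | hN
    · have h0 : fN 0 = 0 := by simp [fN]
      rw [h0]
      exact Real.log_nonneg (by norm_num)
    · exact fN_le N hN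
  have hbdd : IsBoundedUnder (· ≤ ·) atTop fN := ⟨Real.log (4/3), Filter.eventually_map.mpr (Filter.Eventually.of_forall hub)⟩
  have hfreq : ∀ ε : ℝ, 0 < ε → ∃ᶠ N in atTop, Real.log (4/3) - ε ≤ fN N := by
    intro ε hε
    have h1 : Filter.Tendsto (fun k : ℕ => (1/4:ℝ)^(k+1)) atTop (nhds 0) := by
      have h0 := tendsto_pow_atTop_nhds_zero_of_lt_one
        (by norm_num : (0:ℝ) ≤ 1/4) (by norm_num : (1/4:ℝ) < 1)
      exact h0.comp (Filter.tendsto_add_atTop_nat 1)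
    have h2 : Filter.Tendsto (fun k : ℕ => 4/3 * (1 - (1/4:ℝ)^(k+1))) atTop (nhds (4/3)) := by
      have h3 := (tendsto_const_nhds (x := (1:ℝ)) (f := atTop (α := ℕ))).sub h1
      have h4 := h3.const_mul (4/3 : ℝ)
      simpa using h4
    have htend : Filter.Tendsto (fun k : ℕ => Real.log (4/3 * (1 - (1/4:ℝ)^(k+1)))) atTop
        (nhds (Real.log (4/3))) := h2.log (by norm_num)
    have hev : ∀ᶠ k in atTop, Real.log (4/3) - ε < Real.log (4/3 * (1 - (1/4:ℝ)^(k+1))) :=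
      htend.eventually (eventually_gt_nhds (by linarith))
    obtain ⟨k0, hk0⟩ := Filter.eventually_atTop.mp hev
    rw [Filter.frequently_atTop]
    intro M
    refine ⟨Nk (max k0 M + 1), ?_, ?_⟩
    · have hge := Nk_ge (max k0 M + 1)
      have : M ≤ max k0 M := le_max_right _ _
      omega
    · rw [fN_Nk (max k0 M)]
      exact le_of_lt (hk0 (max k0 M) (le_max_left _ _))
  apply le_antisymm
  · apply Filter.limsup_le_of_le ?_ (Filter.Eventually.of_forall hub)
    exact Filter.IsCoboundedUnder.of_frequently_ge (hfreq 1 one_pos)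
  · apply le_of_forall_pos_le_add
    intro ε hε
    have h1 : Real.log (4/3) - ε ≤ Filter.limsup fN atTop :=
      Filter.le_limsup_of_frequently_le (hfreq ε hε) hbdd
    linarith
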